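/- Fix a real α > 1 and 0 < a < 1, let f_a(x) = −|x|^α + a and xₙ = f_aⁿ(0). Define p₂ = x₁/x₂, p₃ = (x₃/x₂)·((x₁ − x₂)/(x₁ − x₃)), and p₄ = ((x₁ − x₄)/(x₁ − x₃)) · ((x₃ − x₂)/(x₄ − x₂)). Then all denominators are nonzero, p₃·p₂/(p₂ + p₃ − 1) = x₃/x₂, and the functional equation (3) holds in the form ( p₃·p₂/(p₂ + p₃ − 1) )^α = p₄·p₂^α/(p₂^α + p₄ − 1); equivalently p₃ = ℓ⁻¹_{p₂}( ( p₄/(1 + (p₄ − 1)/p₂^α) )^{1/α} ) where ℓ_φ(t) = tφ/(φ + t − 1). -/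

import Mathlib

private lemma fe_aux1 (a b c u v : ℝ) (hu : u ≠ 0) (hc : c ≠ 0)
    (hd : a / u + v / u * (b / c) - 1 ≠ 0)
    (hrel : a * b = a * c + v * b - u * c) :
    v / u * (b / c) * (a / u) / (a / u + v / u * (b / c) - 1) = v / u := by
  rw [div_eq_div_iff hd hu]
  field_simp
  linear_combination v * hrel

private lemma fe_aux2 (A B C : ℝ) (hB : B ≠ 0) (hA : A ≠ 0) (hAB : A - B ≠ 0)
    (hAC : A - C ≠ 0) :
    C / B = C / B * ((A - B) / (A - C)) * (A / B) /
      (A / B + C / B * ((A - B) / (A - C)) - 1) := by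
  have hden : A / B + C / B * ((A - B) / (A - C)) - 1 = A * (A - B) / (B * (A - C)) := by
    field_simp; ring
  rw [hden, div_eq_div_iff hB (div_ne_zero (mul_ne_zero hA hAB) (mul_ne_zero hB hAC))]
  field_simp

/-- for α > 1, 0 < a < 1 and the orbit xₙ = f_aⁿ(0) of
f_a(x) = −|x|^α + a, with p₂ = x₁/x₂, p₃ = (x₃/x₂)·((x₁ − x₂)/(x₁ − x₃)) and
p₄ = ((x₁ − x₄)/(x₁ − x₃))·((x₃ − x₂)/(x₄ − x₂)), all denominators are
nonzero, p₃·p₂/(p₂ + p₃ − 1) = x₃/x₂, and the functional equation (3) holds: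
( p₃·p₂/(p₂ + p₃ − 1) )^α = p₄·p₂^α/(p₂^α + p₄ − 1). -/
theorem functional_equation_p3_p4 (α : ℝ) (hα : 1 < α) (a : ℝ)
    (ha : a ∈ Set.Ioo (0 : ℝ) 1)
    (x : ℕ → ℝ) (hx0 : x 0 = 0) (hx : ∀ n : ℕ, x (n + 1) = -|x n| ^ α + a)
    (p₂ p₃ p₄ : ℝ)
    (hp₂ : p₂ = x 1 / x 2)
    (hp₃ : p₃ = (x 3 / x 2) * ((x 1 - x 2) / (x 1 - x 3)))
    (hp₄ : p₄ = ((x 1 - x 4) / (x 1 - x 3)) * ((x 3 - x 2) / (x 4 - x 2))) :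
    x 2 ≠ 0 ∧ x 1 - x 3 ≠ 0 ∧ x 4 - x 2 ≠ 0 ∧ p₂ + p₃ - 1 ≠ 0 ∧
    p₃ * p₂ / (p₂ + p₃ - 1) = x 3 / x 2 ∧
    (p₃ * p₂ / (p₂ + p₃ - 1)) ^ α = p₄ * p₂ ^ α / (p₂ ^ α + p₄ - 1) := by
  obtain ⟨ha0, ha1⟩ := ha
  have hα0 : (0:ℝ) < α := by linarith
  have hx1 : x 1 = a := by
    have := hx 0
    rw [hx0] at this
    simpa [Real.zero_rpow (ne_of_gt hα0)] using this
  have hAa : a ^ α < a := by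
    have := Real.rpow_lt_rpow_of_exponent_gt ha0 ha1 hα
    simpa using this
  have hApos : (0:ℝ) < a ^ α := Real.rpow_pos_of_pos ha0 α
  have hx2 : x 2 = a - a ^ α := by
    have := hx 1
    rw [hx1, abs_of_pos ha0] at this
    linarith
  have h2pos : 0 < x 2 := by rw [hx2]; linarith
  have h2lta : x 2 < a := by rw [hx2]; linarith
  have h2lt1 : x 2 < 1 := lt_trans h2lta ha1
  have hBa : x 2 ^ α < x 2 := by
    have := Real.rpow_lt_rpow_of_exponent_gt h2pos h2lt1 hα
    simpa using this
  have hBpos : (0:ℝ) < x 2 ^ α := Real.rpow_pos_of_pos h2pos α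
  have hBA : x 2 ^ α < a ^ α := Real.rpow_lt_rpow (le_of_lt h2pos) h2lta hα0
  have hx3 : x 3 = a - x 2 ^ α := by
    have := hx 2
    rw [abs_of_pos h2pos] at this
    linarith
  have h3pos : 0 < x 3 := by rw [hx3]; nlinarith
  have h3lta : x 3 < a := by rw [hx3]; linarith
  have hCA : x 3 ^ α < a ^ α := Real.rpow_lt_rpow (le_of_lt h3pos) h3lta hα0
  have hCpos : (0:ℝ) < x 3 ^ α := Real.rpow_pos_of_pos h3pos α
  have hx4 : x 4 = a - x 3 ^ α := by
    have := hx 3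
    rw [abs_of_pos h3pos] at this
    linarith
  -- differences
  have h12 : x 1 - x 2 = a ^ α := by rw [hx1, hx2]; ring
  have h13 : x 1 - x 3 = x 2 ^ α := by rw [hx1, hx3]; ring
  have h14 : x 1 - x 4 = x 3 ^ α := by rw [hx1, hx4]; ring
  have h32 : x 3 - x 2 = a ^ α - x 2 ^ α := by rw [hx3]; linarith
  have h42 : x 4 - x 2 = a ^ α - x 3 ^ α := by rw [hx2, hx4]; ring
  have d1 : x 2 ≠ 0 := ne_of_gt h2pos
  have d2 : x 1 - x 3 ≠ 0 := by rw [h13]; exact ne_of_gt hBpos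
  have d3 : x 4 - x 2 ≠ 0 := by rw [h42]; exact ne_of_gt (by linarith)
  have hp₂' : p₂ = a / x 2 := by rw [hp₂, hx1]
  have hp₃' : p₃ = (x 3 / x 2) * (a ^ α / x 2 ^ α) := by rw [hp₃, h12, h13]
  have hp₄' : p₄ = (x 3 ^ α / x 2 ^ α) * ((a ^ α - x 2 ^ α) / (a ^ α - x 3 ^ α)) := by
    rw [hp₄, h13, h14, h32, h42]
  have hp2gt1 : 1 < p₂ := by
    rw [hp₂', lt_div_iff₀ h2pos]
    linarith
  have hp3pos : 0 < p₃ := by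
    rw [hp₃']
    exact mul_pos (div_pos h3pos h2pos) (div_pos hApos hBpos)
  have d4' : 0 < p₂ + p₃ - 1 := by linarith
  have d4 : p₂ + p₃ - 1 ≠ 0 := ne_of_gt d4'
  have key : p₃ * p₂ / (p₂ + p₃ - 1) = x 3 / x 2 := by
    rw [hp₂', hp₃'] at d4 ⊢
    refine fe_aux1 a (a ^ α) (x 2 ^ α) (x 2) (x 3) d1 (ne_of_gt hBpos) d4 ?_
    linear_combination x 2 ^ α * hx2 - a ^ α * hx3
  refine ⟨d1, d2, d3, d4, key, ?_⟩
  rw [key]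
  have hdiv : (x 3 / x 2) ^ α = x 3 ^ α / x 2 ^ α :=
    Real.div_rpow (le_of_lt h3pos) (le_of_lt h2pos) α
  have hp2α : p₂ ^ α = a ^ α / x 2 ^ α := by
    rw [hp₂']
    exact Real.div_rpow (le_of_lt ha0) (le_of_lt h2pos) α
  rw [hdiv, hp2α, hp₄']
  exact fe_aux2 (a ^ α) (x 2 ^ α) (x 3 ^ α) (ne_of_gt hBpos) (ne_of_gt hApos)
    (ne_of_gt (by linarith)) (ne_of_gt (by linarith))
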